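/- Let N ≥ 1 and let H_N be the N×N Bessel Hessenberg matrix. Then the characteristic polynomial p_N(λ) = det(λI − H_N) satisfies, for every complex number λ, 2^{N−1} p_N(λ) = (−i)^N T_N(i λ), where T_N is the N-th Chebyshev polynomial of the first kind. Equivalently, for every ℓ with 0 ≤ ℓ ≤ N, the coefficient of λ^ℓ in 2^{N−1} p_N(λ) equals the absolute value |T_{N,ℓ}| of the coefficient of x^ℓ in T_N(x). -/

import Mathlib

/-- The Bessel Hessenberg matrix: `(H_N)_{1,2} = -1`, subdiagonal entries `1/2`,
superdiagonal entries `-1/2` (for rows `2 ≤ i ≤ N`), all indices here 1-based. -/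
noncomputable def besselH (N : ℕ) : Matrix (Fin N) (Fin N) ℝ := fun i j =>
  if (i : ℕ) = 0 ∧ (j : ℕ) = 1 then -1
  else if (j : ℕ) + 1 = (i : ℕ) then 1/2
  else if (i : ℕ) + 1 = (j : ℕ) ∧ 1 ≤ (i : ℕ) then -(1/2)
  else 0

open Polynomial Matrix

noncomputable def Pd : ℕ → ℝ[X]
  | 0 => 1
  | 1 => X
  | (n+2) => X * Pd (n+1) + C (1/4) * Pd n

noncomputable def Rp : ℕ → ℝ[X]
  | 0 => 1
  | 1 => X
  | (n+2) => 2 * X * Rp (n+1) + Rp n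

noncomputable def Dmat (n : ℕ) : Matrix (Fin n) (Fin n) ℝ[X] := fun i j =>
  if (i : ℕ) = j then X else if (j : ℕ) + 1 = i then -C (1/2)
  else if (i : ℕ) + 1 = j then C (1/2) else 0

example (n : ℕ) : (Dmat (n+1)).submatrix Fin.succ Fin.succ = Dmat n := by
  ext i j
  simp [Dmat, Fin.val_succ]

lemma Dmat_sub2 (n : ℕ) :
    (Dmat (n+2)).submatrix (Fin.succ ∘ Fin.succ) ((1 : Fin (n+2)).succAbove ∘ Fin.succ) = Dmat n := by
  ext i j
  have h : (1 : Fin (n+2)).succAbove j.succ = j.succ.succ := by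
    simpa using Fin.succ_succAbove_succ (0 : Fin (n+1)) j
  simp [h, Dmat, Fin.val_succ]

lemma detD : ∀ n, (Dmat n).det = Pd n := by
  intro n
  induction n using Nat.twoStepInduction with
  | zero => simp [Dmat, Pd]
  | one => simp [Dmat, Pd, det_fin_one]
  | more n ih0 ih1 =>
    have sub1 : ∀ m, (Dmat (m+1)).submatrix Fin.succ Fin.succ = Dmat m := by
      intro m; ext i j; simp [Dmat, Fin.val_succ]
    rw [show n + 2 = (n+1).succ from rfl, det_succ_row_zero]
    rw [Fin.sum_univ_succ, Fin.sum_univ_succ]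
    have hz : ∀ j : Fin n, Dmat (n+2) 0 j.succ.succ = 0 := by
      intro j; simp [Dmat, Fin.val_succ]
    have h00 : Dmat (n+2) 0 0 = X := by simp [Dmat]
    have h01 : Dmat (n+2) 0 ((0 : Fin (n+1)).succ) = C (1/2) := by
      simp [Dmat]
    have hminor0 : (Dmat (n+2)).submatrix Fin.succ ((0 : Fin (n+2)).succAbove) = Dmat (n+1) := by
      rw [Fin.succAbove_zero]; exact sub1 (n+1)
    have hminor1 :
        ((Dmat (n+2)).submatrix Fin.succ (((0 : Fin (n+1)).succ).succAbove)).det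
          = -C (1/2) * Pd n := by
      rw [det_succ_column_zero, Fin.sum_univ_succ]
      have e0 : ((0:Fin (n+1)).succ).succAbove 0 = 0 := by
        exact Fin.succAbove_ne_zero_zero (Fin.succ_ne_zero 0)
      have hcol : ∀ i : Fin n,
          (Dmat (n+2)).submatrix Fin.succ (((0 : Fin (n+1)).succ).succAbove) i.succ 0 = 0 := by
        intro i
        simp [e0, Dmat, Fin.val_succ]
      have hA00 : (Dmat (n+2)).submatrix Fin.succ (((0 : Fin (n+1)).succ).succAbove) 0 0
          = -C (1/2) := by
        simp [e0, Dmat]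
      have hsub : ((Dmat (n+2)).submatrix Fin.succ
            (((0 : Fin (n+1)).succ).succAbove)).submatrix (Fin.succAbove 0) Fin.succ
          = Dmat n := by
        rw [Matrix.submatrix_submatrix, Fin.succAbove_zero]
        exact Dmat_sub2 n
      simp only [hcol, hA00, hsub, zero_mul, mul_zero, Finset.sum_const_zero, add_zero,
        Fin.val_zero, pow_zero, one_mul]
      rw [ih0]
    simp only [hz, hminor0, hminor1, h00, h01, ih1, zero_mul, mul_zero,
      Finset.sum_const_zero, add_zero, Fin.val_zero, pow_zero, one_mul, Fin.val_succ,
      zero_add, pow_one]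
    rw [show Pd (n+1).succ = X * Pd (n+1) + C (1/4) * Pd n from rfl,
      show (C (1/4 : ℝ) : ℝ[X]) = C (1/2) * C (1/2) from by rw [← C_mul]; norm_num]
    ring

lemma charB (m : ℕ) (i j : Fin m) :
    charmatrix (besselH m) i j =
      (if (i:ℕ) = j then X else if (i:ℕ) = 0 ∧ (j:ℕ) = 1 then C 1
       else if (j:ℕ)+1 = i then -C (1/2)
       else if (i:ℕ)+1 = j ∧ 1 ≤ (i:ℕ) then C (1/2) else 0) := by
  by_cases h : i = j
  · subst h
    rw [charmatrix_apply_eq]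
    have : besselH m i i = 0 := by
      simp only [besselH]
      split_ifs with h1 h2 h3 <;> first | rfl | omega
    simp [this]
  · rw [charmatrix_apply_ne _ _ _ h]
    have hv : (i:ℕ) ≠ (j:ℕ) := fun hc => h (Fin.ext hc)
    simp only [besselH, hv, if_false]
    split_ifs <;> simp <;> norm_num

lemma detB (n : ℕ) :
    (besselH (n+2)).charpoly = X * Pd (n+1) + C (1/2) * Pd n := by
  have subB : (charmatrix (besselH (n+2))).submatrix Fin.succ Fin.succ = Dmat (n+1) := by
    ext i j
    rw [Matrix.submatrix_apply, charB]
    simp [Dmat, Fin.val_succ]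
  have subB2 : (charmatrix (besselH (n+2))).submatrix (Fin.succ ∘ Fin.succ)
      ((1 : Fin (n+2)).succAbove ∘ Fin.succ) = Dmat n := by
    ext i j
    have h : (1 : Fin (n+2)).succAbove j.succ = j.succ.succ := by
      simpa using Fin.succ_succAbove_succ (0 : Fin (n+1)) j
    rw [Matrix.submatrix_apply, Function.comp_apply, Function.comp_apply, h, charB]
    simp [Dmat, Fin.val_succ]
  rw [Matrix.charpoly, show n + 2 = (n+1).succ from rfl, det_succ_row_zero]
  rw [Fin.sum_univ_succ, Fin.sum_univ_succ]
  have hz : ∀ j : Fin n, charmatrix (besselH (n+2)) 0 j.succ.succ = 0 := by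
    intro j; rw [charB]; simp [Fin.val_succ]
  have h00 : charmatrix (besselH (n+2)) 0 0 = X := by rw [charB]; simp
  have h01 : charmatrix (besselH (n+2)) 0 ((0 : Fin (n+1)).succ) = C 1 := by
    rw [charB]; simp
  have hminor0 : (charmatrix (besselH (n+2))).submatrix Fin.succ ((0 : Fin (n+2)).succAbove)
      = Dmat (n+1) := by
    rw [Fin.succAbove_zero]; exact subB
  have hminor1 :
      ((charmatrix (besselH (n+2))).submatrix Fin.succ (((0 : Fin (n+1)).succ).succAbove)).det
        = -C (1/2) * Pd n := by
    rw [det_succ_column_zero, Fin.sum_univ_succ]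
    have e0 : ((0:Fin (n+1)).succ).succAbove 0 = 0 :=
      Fin.succAbove_ne_zero_zero (Fin.succ_ne_zero 0)
    have hcol : ∀ i : Fin n,
        (charmatrix (besselH (n+2))).submatrix Fin.succ (((0 : Fin (n+1)).succ).succAbove)
          i.succ 0 = 0 := by
      intro i
      rw [Matrix.submatrix_apply, e0, charB]
      simp [Fin.val_succ]
    have hA00 : (charmatrix (besselH (n+2))).submatrix Fin.succ
        (((0 : Fin (n+1)).succ).succAbove) 0 0 = -C (1/2) := by
      rw [Matrix.submatrix_apply, e0, charB]; simp
    have hsub : ((charmatrix (besselH (n+2))).submatrix Fin.succ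
          (((0 : Fin (n+1)).succ).succAbove)).submatrix (Fin.succAbove 0) Fin.succ
        = Dmat n := by
      rw [Matrix.submatrix_submatrix, Fin.succAbove_zero]
      exact subB2
    simp only [hcol, hA00, hsub, zero_mul, mul_zero, Finset.sum_const_zero, add_zero,
      Fin.val_zero, pow_zero, one_mul]
    rw [detD]
  simp only [hz, hminor0, hminor1, h00, h01, zero_mul, mul_zero,
    Finset.sum_const_zero, add_zero, Fin.val_zero, pow_zero, one_mul, Fin.val_succ,
    zero_add, pow_one, detD, Polynomial.C_1, one_mul]
  ring

lemma charB1 : (besselH 1).charpoly = X := by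
  rw [Matrix.charpoly, det_fin_one, charB]
  simp

lemma key : ∀ n : ℕ, (2:ℝ[X])^(n+1) * (X * Pd (n+1) + C (1/2) * Pd n) = Rp (n+2) := by
  have hy : (2:ℝ[X]) * C (1/2 : ℝ) = 1 := by
    rw [show (2:ℝ[X]) = C 2 from (map_ofNat Polynomial.C 2).symm, ← C_mul]; norm_num
  have hq : (C (1/4 : ℝ) : ℝ[X]) = C (1/2) * C (1/2) := by rw [← C_mul]; norm_num
  intro n
  induction n using Nat.twoStepInduction with
  | zero =>
    show (2:ℝ[X])^1 * (X * X + C (1/2) * 1) = 2 * X * X + 1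
    linear_combination X * 0 + hy
  | one =>
    show (2:ℝ[X])^2 * (X * (X * X + C (1/4) * 1) + C (1/2) * X)
        = 2 * X * (2 * X * X + 1) + X
    rw [hq]
    linear_combination (X * (2 * C (1/2:ℝ) + 1) + 2 * X) * hy
  | more n ih0 ih1 =>
    show (2:ℝ[X])^(n+3) * (X * (X * Pd (n+2) + C (1/4) * Pd (n+1)) + C (1/2) * Pd (n+2))
        = 2 * X * Rp (n+3) + Rp (n+2)
    rw [← ih1, ← ih0, hq,
      show Pd (n+2) = X * Pd (n+1) + C (1/4) * Pd n from rfl, hq]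
    linear_combination ((2:ℝ[X])^(n+1) * (X * Pd (n+1) + C (1/2) * Pd n)
      * (2 * C (1/2:ℝ) + 1)) * hy

lemma main (N : ℕ) (hN : 1 ≤ N) :
    C ((2:ℝ)^(N-1)) * (besselH N).charpoly = Rp N := by
  have hc : ∀ m : ℕ, (C ((2:ℝ)^m) : ℝ[X]) = 2^m := by
    intro m; rw [map_pow, map_ofNat Polynomial.C 2]
  match N, hN with
  | 1, _ => rw [charB1]; simp [Rp]
  | (n+2), _ =>
    rw [detB, show n + 2 - 1 = n + 1 from rfl, hc]
    exact key n

open Polynomial.Chebyshev Complex in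
lemma evalRp : ∀ (n : ℕ) (z : ℂ),
    Polynomial.aeval z (Rp n) = (-I)^n * Polynomial.eval (I * z) (T ℂ (n:ℤ)) := by
  intro n
  induction n using Nat.twoStepInduction with
  | zero => intro z; simp [Rp, T_zero]
  | one =>
    intro z
    simp only [Rp, Nat.cast_one, T_one, aeval_X, eval_X, pow_one]
    linear_combination z * Complex.I_mul_I
  | more n ih0 ih1 =>
    intro z
    have hT : T ℂ ((n+2 : ℕ) : ℤ) = 2 * X * T ℂ ((n+1 : ℕ) : ℤ) - T ℂ (n : ℤ) := by
      push_cast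
      exact T_add_two ℂ n
    rw [show Rp (n+2) = 2 * X * Rp (n+1) + Rp n from rfl, hT]
    simp only [_root_.map_add, _root_.map_mul, aeval_X, map_ofNat, eval_sub, eval_mul, eval_X,
      eval_ofNat, ih0, ih1]
    linear_combination ((-I)^n * Polynomial.eval (I*z) (T ℂ (n:ℤ))
      - 2 * (-I)^n * z * I * Polynomial.eval (I*z) (T ℂ ((n+1:ℕ):ℤ))) * Complex.I_mul_I

open Polynomial.Chebyshev Complex in
lemma coeffRp : ∀ (n : ℕ) (l : ℕ),
    (((Rp n).coeff l : ℝ) : ℂ) = (-I)^n * I^l * ((T ℂ (n:ℤ)).coeff l) := by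
  intro n
  induction n using Nat.twoStepInduction with
  | zero =>
    intro l
    rcases l with _ | l <;> simp [Rp, T_zero, coeff_one]
  | one =>
    intro l
    rcases l with _ | l
    · simp [Rp, T_one]
    rcases l with _ | l
    · simp only [Rp, Nat.cast_one, T_one, coeff_X_one, pow_one, mul_one]
      norm_num
    · simp [Rp, T_one, coeff_X]
  | more n ih0 ih1 =>
    intro l
    have hT : T ℂ ((n+2 : ℕ) : ℤ) = 2 * X * T ℂ ((n+1 : ℕ) : ℤ) - T ℂ (n : ℤ) := by
      push_cast
      exact T_add_two ℂ n
    rw [show Rp (n+2) = 2 * X * Rp (n+1) + Rp n from rfl, hT]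
    rcases l with _ | l
    · simp only [coeff_add, coeff_sub, mul_assoc, coeff_ofNat_mul, Polynomial.mul_coeff_zero,
        coeff_X_zero, zero_mul, mul_zero, zero_add, ih0]
      push_cast
      linear_combination ((-I)^n * (T ℂ (n:ℤ)).coeff 0) * Complex.I_mul_I
    · simp only [coeff_add, coeff_sub, mul_assoc, coeff_ofNat_mul, coeff_X_mul, ih0, ih1]
      push_cast
      linear_combination (norm := (push_cast; ring1)) 2 * ih1 l + ih0 (l+1)
        + ((-I)^n * I^(l+1) * ((T ℂ (n:ℤ)).coeff (l+1)
        - 2 * (T ℂ ((n+1:ℕ):ℤ)).coeff l)) * Complex.I_mul_I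

lemma coeffRp_nonneg : ∀ (n : ℕ) (l : ℕ), 0 ≤ (Rp n).coeff l := by
  intro n
  induction n using Nat.twoStepInduction with
  | zero => intro l; rcases l with _ | l <;> simp [Rp, coeff_one]
  | one => intro l; simp [Rp, coeff_X]; split_ifs <;> norm_num
  | more n ih0 ih1 =>
    intro l
    rw [show Rp (n+2) = 2 * X * Rp (n+1) + Rp n from rfl]
    rcases l with _ | l
    · simp only [coeff_add, mul_assoc, coeff_ofNat_mul, Polynomial.mul_coeff_zero,
        coeff_X_zero, zero_mul, mul_zero, zero_add]
      exact ih0 0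
    · simp only [coeff_add, mul_assoc, coeff_ofNat_mul, coeff_X_mul]
      have := ih1 l
      have := ih0 (l+1)
      positivity

/-- The characteristic polynomial `p_N(λ) = det(λI - H_N)` of the Bessel Hessenberg matrix
satisfies `2^(N-1) p_N(λ) = (-i)^N T_N(iλ)` for every complex `λ`, where `T_N` is the `N`-th
Chebyshev polynomial of the first kind; equivalently, for `0 ≤ ℓ ≤ N`, the coefficient of
`λ^ℓ` in `2^(N-1) p_N(λ)` equals the absolute value of the coefficient of `x^ℓ` in `T_N`. -/
theorem charpoly_besselH_eq_chebyshev (N : ℕ) (hN : 1 ≤ N) :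
    (∀ l : ℂ, (2 : ℂ) ^ (N - 1) * Polynomial.aeval l ((besselH N).charpoly) =
      (-Complex.I) ^ N * Polynomial.eval (Complex.I * l) (Polynomial.Chebyshev.T ℂ (N : ℤ))) ∧
    (∀ l : ℕ, l ≤ N →
      (Polynomial.C ((2 : ℝ) ^ (N - 1)) * (besselH N).charpoly).coeff l =
        |(Polynomial.Chebyshev.T ℝ (N : ℤ)).coeff l|) := by
  have hm := main N hN
  constructor
  · intro l
    have h := congrArg (Polynomial.aeval l) hm
    rw [_root_.map_mul, aeval_C, evalRp N l] at h
    rw [← h]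
    congr 1
    simp [Complex.ofReal_pow]
  · intro l _
    have h1 : (C ((2:ℝ)^(N-1)) * (besselH N).charpoly).coeff l = (Rp N).coeff l := by
      rw [hm]
    rw [h1]
    have hmap : ((Polynomial.Chebyshev.T ℂ (N:ℤ)).coeff l)
        = (((Polynomial.Chebyshev.T ℝ (N:ℤ)).coeff l : ℝ) : ℂ) := by
      rw [← Polynomial.Chebyshev.map_T (algebraMap ℝ ℂ) (N:ℤ), Polynomial.coeff_map]
      rfl
    have h2 := coeffRp N l
    rw [hmap] at h2
    have habs := congrArg norm h2
    rw [Complex.norm_real, norm_mul, norm_mul, norm_pow, norm_pow,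
      Complex.norm_real] at habs
    simp only [norm_neg, Complex.norm_I, one_pow, one_mul, Real.norm_eq_abs] at habs
    rw [← habs]
    exact (abs_of_nonneg (coeffRp_nonneg N l)).symm
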